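/- Let the replacement rule represent neutral drift and let the evolutionary Markov chain have mutation probability u = 0. Then for every state x ∈ {0,1}^G, the fixation probability of allele A from x equals the RV-weighted frequency: lim_{t→∞} P^{(t)}_{x→A} = x̂, where x̂ = (1/n) Σ_{g∈G} v_g x_g. In particular, lim_{t→∞} P^{(t)}_{1_{{g}}→A} = v_g/n for each g ∈ G, and the overall fixation probabilities satisfy ρ_A = ρ_a = b̂°/(n b°), where b° = Σ_{g,h} e°_{gh} and b̂° = Σ_{g,h} e°_{gh} v_h. -/

import Mathlib

/-!
Common formal scaffold for "A mathematical formalism for natural selection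
with arbitrary spatial and genetic structure" (Allen & McAvoy).

A population is a finite nonempty set `G` of genetic sites.  A state is a
subset of `G` (the set of sites occupied by allele `A`); `∅` is the
monoallelic state `a` and `Finset.univ` is the monoallelic state `A`.
A replacement event is a pair `(R, α)` with `R ⊆ G` and `α : R → G`.
-/

open Filter Topology Set

namespace NatSel

variable (G : Type) [Fintype G] [DecidableEq G]

/-- A state of the population: the set of sites holding allele `A`. -/
abbrev PopState := Finset G

/-- A replacement event `(R, α)`: the replaced set `R ⊆ G` together with the
parentage map `α : R → G`. -/
abbrev RepEvent := Σ R : Finset G, (↥R → G)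

variable {G}

/-- `x_g ∈ {0,1}` as a real number. -/
def xg (x : PopState G) (g : G) : ℝ := if g ∈ x then 1 else 0

/-- `α̃` : agrees with `α` on `R`, is the identity off `R`. -/
def tildeMap (e : RepEvent G) (g : G) : G :=
  if h : g ∈ e.1 then e.2 ⟨g, h⟩ else g

/-- `p` is a replacement rule: for each state it gives a probability
distribution over replacement events. -/
def IsRule (p : PopState G → RepEvent G → ℝ) : Prop :=
  (∀ x e, 0 ≤ p x e) ∧ ∀ x, ∑ e : RepEvent G, p x e = 1

/-- The Fixation Axiom. -/
def FixationAxiom (p : PopState G → RepEvent G → ℝ) : Prop :=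
  ∃ g : G, ∃ m : ℕ, 0 < m ∧ ∃ ev : Fin m → RepEvent G,
    (∀ k, ∀ x : PopState G, 0 < p x (ev k)) ∧
    (∃ k, g ∈ (ev k).1) ∧
    (∀ h : G, (List.ofFn fun k => tildeMap (ev k)).foldr (· ∘ ·) id h = g)

/-- `e_{gh}(x)`: marginal probability that the allele in site `h` is replaced
by a copy of the allele in site `g`, in state `x`. -/
def eMarg (p : PopState G → RepEvent G → ℝ) (g h : G) (x : PopState G) : ℝ :=
  ∑ e : RepEvent G, if hh : h ∈ e.1 then (if e.2 ⟨h, hh⟩ = g then p x e else 0) else 0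

/-- `b_g(x)`: expected offspring number (birth rate) of site `g` in state `x`. -/
def bRate (p : PopState G → RepEvent G → ℝ) (g : G) (x : PopState G) : ℝ :=
  ∑ h, eMarg p g h x

/-- `d_g(x)`: death probability of site `g` in state `x`. -/
def dProb (p : PopState G → RepEvent G → ℝ) (g : G) (x : PopState G) : ℝ :=
  ∑ h, eMarg p h g x

/-- `b(x)`: total expected offspring number in state `x`. -/
def bTot (p : PopState G → RepEvent G → ℝ) (x : PopState G) : ℝ :=
  ∑ g, bRate p g x

/-- Probability that a replaced site whose parent holds allele `parent`
(`true` = `A`) acquires allele `child`, with mutation probability `u` and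
mutational bias `ν`. -/
def siteProb (u ν : ℝ) (parent child : Bool) : ℝ :=
  (if child = parent then 1 - u else 0) + (if child = true then u * ν else u * (1 - ν))

/-- One-step transition probability `P_{x → y}` of the evolutionary Markov
chain with replacement rule `p`, mutation probability `u`, mutational bias `ν`. -/
def step (p : PopState G → RepEvent G → ℝ) (u ν : ℝ) (x y : PopState G) : ℝ :=
  ∑ e : RepEvent G, p x e *
    (if y \ e.1 = x \ e.1 then
       ∏ g ∈ e.1.attach, siteProb u ν (decide (e.2 g ∈ x)) (decide (g.1 ∈ y))
     else 0)

/-- `t`-step transition probabilities of a kernel `P`. -/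
def iterKer (P : PopState G → PopState G → ℝ) : ℕ → PopState G → PopState G → ℝ
  | 0, x, y => if x = y then 1 else 0
  | (t + 1), x, y => ∑ z : PopState G, iterKer P t x z * P z y

/-- The state obtained from `x` by the (mutation-free) replacement event `e`. -/
def applyEvent (e : RepEvent G) (x : PopState G) : PopState G :=
  Finset.univ.filter fun g => tildeMap e g ∈ x

/-- One-step transition probability of the mutation-free (`u = 0`) chain. -/
def step0 (p : PopState G → RepEvent G → ℝ) (x y : PopState G) : ℝ :=
  ∑ e : RepEvent G, if y = applyEvent e x then p x e else 0

/-- The mutant appearance distribution `μ_A`: probability `d_g(a)/b(a)` on the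
state `{g}`, for each `g ∈ G`. -/
noncomputable def muA (p : PopState G → RepEvent G → ℝ) (x : PopState G) : ℝ :=
  ∑ g : G, if x = {g} then dProb p g ∅ / bTot p ∅ else 0

/-- The mutant appearance distribution `μ_a`: probability `d_g(A)/b(A)` on the
state `G \ {g}`, for each `g ∈ G`. -/
noncomputable def mua (p : PopState G → RepEvent G → ℝ) (x : PopState G) : ℝ :=
  ∑ g : G, if x = Finset.univ \ {g} then dProb p g Finset.univ / bTot p Finset.univ else 0

/-- Fixation probability `ρ_A` (computed at `u = 0`). -/
noncomputable def rhoA (p : PopState G → RepEvent G → ℝ) (ν : ℝ) : ℝ :=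
  ∑ x : PopState G, muA p x *
    limUnder atTop (fun t => iterKer (step p 0 ν) t x Finset.univ)

/-- Fixation probability `ρ_a` (computed at `u = 0`). -/
noncomputable def rhoa (p : PopState G → RepEvent G → ℝ) (ν : ℝ) : ℝ :=
  ∑ x : PopState G, mua p x *
    limUnder atTop (fun t => iterKer (step p 0 ν) t x ∅)

/-- Frequency `x = (1/n) Σ_g x_g` of allele `A`. -/
noncomputable def freq (x : PopState G) : ℝ := (x.card : ℝ) / (Fintype.card G : ℝ)

/-- Expected change due to selection, `Δ_sel(x) = Σ_g x_g (b_g(x) − d_g(x))`. -/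
def deltaSel (p : PopState G → RepEvent G → ℝ) (x : PopState G) : ℝ :=
  ∑ g, xg x g * (bRate p g x - dProb p g x)

/-- The finset of states other than the monoallelic states `a = ∅`, `A = univ`. -/
def offStates (G : Type) [Fintype G] [DecidableEq G] : Finset (PopState G) :=
  Finset.univ.filter fun x : PopState G => x ≠ ∅ ∧ x ≠ Finset.univ

/-- Assumption 1: consistency of monoallelic states. -/
def ConsistentMono (p : PopState G → RepEvent G → ℝ) : Prop :=
  ∀ e : RepEvent G, p ∅ e = p Finset.univ e

/-- A replacement rule represents neutral drift: probabilities are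
state-independent. -/
def NeutralDrift (p : PopState G → RepEvent G → ℝ) : Prop :=
  ∀ x e, p x e = p ∅ e

/-- Reproductive values: `{v_g}` solves `d°_g v_g = Σ_h e°_{gh} v_h` (with the
monoallelic-state quantities) together with `Σ_g v_g = n`. -/
def IsRepVal (p : PopState G → RepEvent G → ℝ) (v : G → ℝ) : Prop :=
  (∀ g, dProb p g ∅ * v g = ∑ h, eMarg p g h ∅ * v h) ∧
    ∑ g, v g = (Fintype.card G : ℝ)

/-- RV-weighted birth rate `b̂_g(x) = Σ_h e_{gh}(x) v_h`. -/
def bHat (p : PopState G → RepEvent G → ℝ) (v : G → ℝ) (g : G) (x : PopState G) : ℝ :=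
  ∑ h, eMarg p g h x * v h

/-- RV-weighted death rate `d̂_g(x) = v_g d_g(x)`. -/
def dHat (p : PopState G → RepEvent G → ℝ) (v : G → ℝ) (g : G) (x : PopState G) : ℝ :=
  v g * dProb p g x

/-- Total RV-weighted birth rate `b̂(x)`. -/
def bHatTot (p : PopState G → RepEvent G → ℝ) (v : G → ℝ) (x : PopState G) : ℝ :=
  ∑ g, bHat p v g x

/-- RV-weighted change due to selection `Δ̂_sel(x) = Σ_g x_g (b̂_g(x) − d̂_g(x))`. -/
def deltaHatSel (p : PopState G → RepEvent G → ℝ) (v : G → ℝ) (x : PopState G) : ℝ :=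
  ∑ g, xg x g * (bHat p v g x - dHat p v g x)

/-- Fitness `w_g(x) = v_g − d̂_g(x) + b̂_g(x)`. -/
def fitness (p : PopState G → RepEvent G → ℝ) (v : G → ℝ) (g : G) (x : PopState G) : ℝ :=
  v g - dHat p v g x + bHat p v g x

/-- RV-weighted frequency `x̂ = (1/n) Σ_g v_g x_g`. -/
noncomputable def freqHat (v : G → ℝ) (x : PopState G) : ℝ :=
  (∑ g, v g * xg x g) / (Fintype.card G : ℝ)

/-- `{π u}_{0<u≤1}` is, for each mutation probability `0 < u ≤ 1`, a stationary
distribution of the evolutionary Markov chain (i.e. the mutation-selection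
stationary distribution, which is unique by ergodicity). -/
def IsMSSFamily (p : PopState G → RepEvent G → ℝ) (ν : ℝ)
    (π : ℝ → PopState G → ℝ) : Prop :=
  ∀ u, u ∈ Set.Ioc (0 : ℝ) 1 →
    (∀ x, 0 ≤ π u x) ∧ (∑ x : PopState G, π u x = 1) ∧
      ∀ y, π u y = ∑ x : PopState G, π u x * step p u ν x y

/-- `πR` is the rare-mutation conditional (RMC) distribution associated with
the MSS family `π`: for each non-monoallelic state `x`,
`πR x = lim_{u→0} π_MSS(x)/(1 − π_MSS(A) − π_MSS(a))`. -/
def IsRMC (π : ℝ → PopState G → ℝ) (πR : PopState G → ℝ) : Prop :=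
  ∀ x ∈ offStates G,
    Tendsto (fun u => π u x / (1 - π u Finset.univ - π u ∅))
      (nhdsWithin 0 (Set.Ioi 0)) (nhds (πR x))

end NatSel

open NatSel Filter Topology

namespace NatSel
variable {G : Type} [Fintype G] [DecidableEq G]

lemma mem_applyEvent {e : RepEvent G} {x : PopState G} {g : G} :
    g ∈ applyEvent e x ↔ tildeMap e g ∈ x := by
  simp [applyEvent]

lemma applyEvent_empty (e : RepEvent G) : applyEvent e (∅ : PopState G) = ∅ := by
  ext g; simp [mem_applyEvent]

lemma applyEvent_univ (e : RepEvent G) :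
    applyEvent e (Finset.univ : PopState G) = Finset.univ := by
  ext g; simp [mem_applyEvent]

lemma step0_nonneg {p : PopState G → RepEvent G → ℝ} (hrule : IsRule p)
    (x y : PopState G) : 0 ≤ step0 p x y := by
  refine Finset.sum_nonneg fun e _ => ?_
  split
  · exact hrule.1 x e
  · exact le_rfl

lemma sum_step0 {p : PopState G → RepEvent G → ℝ} (hrule : IsRule p)
    (x : PopState G) : ∑ y : PopState G, step0 p x y = 1 := by
  unfold step0
  rw [Finset.sum_comm]
  simp [Finset.sum_ite_eq', hrule.2 x]

lemma step0_empty {p : PopState G → RepEvent G → ℝ} (hrule : IsRule p)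
    (y : PopState G) : step0 p ∅ y = if y = ∅ then 1 else 0 := by
  unfold step0
  simp only [applyEvent_empty]
  split
  · simp_all [hrule.2]
  · simp_all

lemma step0_univ {p : PopState G → RepEvent G → ℝ} (hrule : IsRule p)
    (y : PopState G) : step0 p Finset.univ y = if y = Finset.univ then 1 else 0 := by
  unfold step0
  simp only [applyEvent_univ]
  split
  · simp_all [hrule.2]
  · simp_all

lemma step0_apply_ge {p : PopState G → RepEvent G → ℝ} (hrule : IsRule p)
    (hneut : NeutralDrift p) (x : PopState G) (e : RepEvent G) :
    p ∅ e ≤ step0 p x (applyEvent e x) := by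
  unfold step0
  have := Finset.single_le_sum (f := fun e' : RepEvent G =>
      if applyEvent e x = applyEvent e' x then p x e' else 0)
    (fun e' _ => by by_cases h : applyEvent e x = applyEvent e' x <;> simp [h, hrule.1])
    (Finset.mem_univ e)
  simp only [hneut x] at this ⊢
  simpa using this

end NatSel
namespace NatSel
variable {G : Type} [Fintype G] [DecidableEq G]

lemma iterKer_nonneg {P : PopState G → PopState G → ℝ}
    (hP : ∀ x y, 0 ≤ P x y) : ∀ t x y, 0 ≤ iterKer P t x y := by
  intro t
  induction t with
  | zero => intro x y; unfold iterKer; split <;> norm_num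
  | succ t ih =>
      intro x y
      exact Finset.sum_nonneg fun z _ => mul_nonneg (ih x z) (hP z y)

lemma sum_iterKer {P : PopState G → PopState G → ℝ}
    (hP : ∀ x, ∑ y : PopState G, P x y = 1) :
    ∀ t x, ∑ y : PopState G, iterKer P t x y = 1 := by
  intro t
  induction t with
  | zero => intro x; simp [iterKer, Finset.sum_ite_eq']
  | succ t ih =>
      intro x
      unfold iterKer
      rw [Finset.sum_comm]
      simp only [← Finset.mul_sum, hP]
      simpa using ih x

lemma iterKer_succ_left (P : PopState G → PopState G → ℝ) :
    ∀ t x y, iterKer P (t + 1) x y = ∑ z : PopState G, P x z * iterKer P t z y := by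
  intro t
  induction t with
  | zero =>
      intro x y
      show (∑ z : PopState G, iterKer P 0 x z * P z y) = _
      simp [iterKer, Finset.sum_ite_eq']
  | succ t ih =>
      intro x y
      show (∑ z : PopState G, iterKer P (t+1) x z * P z y) = _
      calc (∑ z : PopState G, iterKer P (t+1) x z * P z y)
          = ∑ z : PopState G, (∑ w : PopState G, P x w * iterKer P t w z) * P z y := by
            simp only [ih]
        _ = ∑ z : PopState G, ∑ w : PopState G, P x w * (iterKer P t w z * P z y) := by
            simp only [Finset.sum_mul, mul_assoc]
        _ = ∑ w : PopState G, ∑ z : PopState G, P x w * (iterKer P t w z * P z y) :=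
            Finset.sum_comm
        _ = ∑ w : PopState G, P x w * ∑ z : PopState G, iterKer P t w z * P z y := by
            simp only [Finset.mul_sum]
        _ = _ := rfl

lemma iterKer_add (P : PopState G → PopState G → ℝ) (s : ℕ) :
    ∀ t x y, iterKer P (s + t) x y = ∑ z : PopState G, iterKer P s x z * iterKer P t z y := by
  intro t
  induction t with
  | zero => intro x y; simp [iterKer, Finset.sum_ite_eq]
  | succ t ih =>
      intro x y
      show iterKer P (s + t + 1) x y = _
      calc iterKer P (s + t + 1) x y
          = ∑ w : PopState G, iterKer P (s+t) x w * P w y := rfl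
        _ = ∑ w : PopState G, (∑ z : PopState G, iterKer P s x z * iterKer P t z w) * P w y := by
            simp only [ih]
        _ = ∑ w : PopState G, ∑ z : PopState G, iterKer P s x z * (iterKer P t z w * P w y) := by
            simp only [Finset.sum_mul, mul_assoc]
        _ = ∑ z : PopState G, ∑ w : PopState G, iterKer P s x z * (iterKer P t z w * P w y) :=
            Finset.sum_comm
        _ = ∑ z : PopState G, iterKer P s x z * ∑ w : PopState G, iterKer P t z w * P w y := by
            simp only [Finset.mul_sum]
        _ = _ := rfl

lemma iterKer_empty {p : PopState G → RepEvent G → ℝ} (hrule : IsRule p) :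
    ∀ t (y : PopState G), iterKer (step0 p) t ∅ y = if y = ∅ then 1 else 0 := by
  intro t
  induction t with
  | zero => intro y; unfold iterKer; by_cases h : y = (∅ : PopState G) <;> simp [h, eq_comm]
  | succ t ih =>
      intro y
      show (∑ z : PopState G, iterKer (step0 p) t ∅ z * step0 p z y) = _
      simp only [ih, ite_mul, one_mul, zero_mul]
      rw [Finset.sum_ite_eq' Finset.univ (∅ : PopState G) (fun z => step0 p z y)]
      simp [step0_empty hrule]

lemma iterKer_univ {p : PopState G → RepEvent G → ℝ} (hrule : IsRule p) :
    ∀ t (y : PopState G), iterKer (step0 p) t Finset.univ y = if y = Finset.univ then 1 else 0 := by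
  intro t
  induction t with
  | zero => intro y; unfold iterKer; by_cases h : y = (Finset.univ : PopState G) <;> simp [h, eq_comm]
  | succ t ih =>
      intro y
      show (∑ z : PopState G, iterKer (step0 p) t Finset.univ z * step0 p z y) = _
      simp only [ih, ite_mul, one_mul, zero_mul]
      rw [Finset.sum_ite_eq' Finset.univ (Finset.univ : PopState G) (fun z => step0 p z y)]
      simp [step0_univ hrule]

end NatSel
namespace NatSel
variable {G : Type} [Fintype G] [DecidableEq G]

/-- Apply a list of replacement events, head first. -/
def applyList : List (RepEvent G) → PopState G → PopState G
  | [], x => x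
  | e :: L, x => applyList L (applyEvent e x)

lemma mem_applyList (L : List (RepEvent G)) :
    ∀ (x : PopState G) (h : G),
      h ∈ applyList L x ↔ (L.map tildeMap).foldr (· ∘ ·) id h ∈ x := by
  induction L with
  | nil => intro x h; simp [applyList]
  | cons e L ih =>
      intro x h
      show _ ∈ applyList L (applyEvent e x) ↔ _
      rw [ih]
      simp [mem_applyEvent]

lemma reach {p : PopState G → RepEvent G → ℝ} (hrule : IsRule p)
    (hneut : NeutralDrift p) (L : List (RepEvent G)) :
    ∀ x : PopState G, (L.map (p ∅)).prod ≤ iterKer (step0 p) L.length x (applyList L x) := by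
  induction L with
  | nil => intro x; simp [applyList, iterKer]
  | cons e L ih =>
      intro x
      have h1 : iterKer (step0 p) (e :: L).length x (applyList (e :: L) x) =
          ∑ z : PopState G, step0 p x z * iterKer (step0 p) L.length z (applyList L (applyEvent e x)) := by
        exact iterKer_succ_left _ _ _ _
      rw [h1]
      have h2 : p ∅ e * (L.map (p ∅)).prod ≤
          step0 p x (applyEvent e x) *
            iterKer (step0 p) L.length (applyEvent e x) (applyList L (applyEvent e x)) := by
        apply mul_le_mul (step0_apply_ge hrule hneut x e) (ih _)
        · exact List.prod_nonneg (by
            intro a ha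
            obtain ⟨e', _, rfl⟩ := List.mem_map.1 ha
            exact hrule.1 _ _)
        · exact step0_nonneg hrule _ _
      calc ((e :: L).map (p ∅)).prod = p ∅ e * (L.map (p ∅)).prod := by simp
        _ ≤ _ := h2
        _ ≤ _ := Finset.single_le_sum (f := fun z : PopState G =>
              step0 p x z * iterKer (step0 p) L.length z (applyList L (applyEvent e x)))
            (fun z _ => mul_nonneg (step0_nonneg hrule _ _)
              (iterKer_nonneg (step0_nonneg hrule) _ _ _)) (Finset.mem_univ _)

/-- From the fixation axiom: a uniform positive lower bound on absorption. -/
lemma reach_absorb {p : PopState G → RepEvent G → ℝ} (hrule : IsRule p)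
    (hneut : NeutralDrift p) (hfix : FixationAxiom p) :
    ∃ m : ℕ, 0 < m ∧ ∃ δ : ℝ, 0 < δ ∧ ∀ x : PopState G,
      δ ≤ iterKer (step0 p) m x ∅ + iterKer (step0 p) m x Finset.univ := by
  obtain ⟨g, m, hm, ev, hpos, -, hcomp⟩ := hfix
  refine ⟨m, hm, ((List.ofFn ev).map (p ∅)).prod, ?_, ?_⟩
  · apply List.prod_pos
    intro a ha
    obtain ⟨e', he', rfl⟩ := List.mem_map.1 ha
    obtain ⟨k, rfl⟩ := List.mem_ofFn.1 he'
    exact hpos k ∅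
  · intro x
    have hlen : (List.ofFn ev).length = m := List.length_ofFn
    have happ : applyList (List.ofFn ev) x = if g ∈ x then Finset.univ else ∅ := by
      ext h
      rw [mem_applyList]
      have : (List.ofFn ev).map tildeMap = List.ofFn fun k => tildeMap (ev k) := by
        simp [List.map_ofFn]; rfl
      rw [this, hcomp h]
      split <;> simp_all
    have := reach hrule hneut (L := List.ofFn ev) x
    rw [hlen, happ] at this
    by_cases hg : g ∈ x
    · rw [if_pos hg] at this
      have h0 : 0 ≤ iterKer (step0 p) m x ∅ := iterKer_nonneg (step0_nonneg hrule) _ _ _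
      linarith
    · rw [if_neg hg] at this
      have h0 : 0 ≤ iterKer (step0 p) m x Finset.univ := iterKer_nonneg (step0_nonneg hrule) _ _ _
      linarith

end NatSel
namespace NatSel
variable {G : Type} [Fintype G] [DecidableEq G]

lemma eMarg_sum (p : PopState G → RepEvent G → ℝ) (g : G) (y x : PopState G) :
    ∑ h, eMarg p h g y * xg x h =
      ∑ e : RepEvent G, if hg : g ∈ e.1 then p y e * xg x (e.2 ⟨g, hg⟩) else 0 := by
  unfold eMarg
  simp only [Finset.sum_mul]
  rw [Finset.sum_comm]
  refine Finset.sum_congr rfl fun e _ => ?_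
  by_cases hg : g ∈ e.1
  · simp [hg, ite_mul, Finset.sum_ite_eq]
  · simp [hg]

lemma dProb_eq (p : PopState G → RepEvent G → ℝ) (g : G) (x : PopState G) :
    dProb p g x = ∑ e : RepEvent G, if g ∈ e.1 then p x e else 0 := by
  unfold dProb eMarg
  rw [Finset.sum_comm]
  refine Finset.sum_congr rfl fun e _ => ?_
  by_cases hg : g ∈ e.1
  · simp [hg, Finset.sum_ite_eq]
  · simp [hg]

lemma key_g {p : PopState G → RepEvent G → ℝ} (hrule : IsRule p)
    (x : PopState G) (g : G) :
    ∑ e : RepEvent G, p ∅ e * xg x (tildeMap e g) =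
      (∑ h, eMarg p h g ∅ * xg x h) + (1 - dProb p g ∅) * xg x g := by
  have main : ∀ e : RepEvent G, p ∅ e * xg x (tildeMap e g) =
      (if hg : g ∈ e.1 then p ∅ e * xg x (e.2 ⟨g, hg⟩) else 0) +
        (p ∅ e * xg x g - (if g ∈ e.1 then p ∅ e else 0) * xg x g) := by
    intro e
    by_cases hg : g ∈ e.1 <;> simp [tildeMap, hg]
  calc ∑ e : RepEvent G, p ∅ e * xg x (tildeMap e g)
      = ∑ e : RepEvent G, ((if hg : g ∈ e.1 then p ∅ e * xg x (e.2 ⟨g, hg⟩) else 0) +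
          (p ∅ e * xg x g - (if g ∈ e.1 then p ∅ e else 0) * xg x g)) :=
        Finset.sum_congr rfl fun e _ => main e
    _ = (∑ e : RepEvent G, if hg : g ∈ e.1 then p ∅ e * xg x (e.2 ⟨g, hg⟩) else 0) +
          ((∑ e : RepEvent G, p ∅ e) * xg x g -
            (∑ e : RepEvent G, if g ∈ e.1 then p ∅ e else 0) * xg x g) := by
        rw [Finset.sum_add_distrib, Finset.sum_sub_distrib, Finset.sum_mul, Finset.sum_mul]
    _ = (∑ h, eMarg p h g ∅ * xg x h) + (1 - dProb p g ∅) * xg x g := by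
        rw [eMarg_sum p g ∅ x, dProb_eq, hrule.2]
        ring

lemma xg_applyEvent (e : RepEvent G) (x : PopState G) (g : G) :
    xg (applyEvent e x) g = xg x (tildeMap e g) := by
  unfold xg
  by_cases h : tildeMap e g ∈ x <;> simp [mem_applyEvent, h]

lemma harmonic {p : PopState G → RepEvent G → ℝ} (hrule : IsRule p)
    (hneut : NeutralDrift p) {v : G → ℝ} (hv : IsRepVal p v) (x : PopState G) :
    ∑ y : PopState G, step0 p x y * freqHat v y = freqHat v x := by
  have hS : ∑ y : PopState G, step0 p x y * (∑ g, v g * xg y g) =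
      ∑ g, v g * xg x g := by
    unfold step0
    calc ∑ y : PopState G, (∑ e : RepEvent G, if y = applyEvent e x then p x e else 0) *
            (∑ g, v g * xg y g)
        = ∑ y : PopState G, ∑ e : RepEvent G,
            (if y = applyEvent e x then p x e * (∑ g, v g * xg y g) else 0) := by
          refine Finset.sum_congr rfl fun y _ => ?_
          rw [Finset.sum_mul]
          refine Finset.sum_congr rfl fun e _ => ?_
          split <;> simp
      _ = ∑ e : RepEvent G, ∑ y : PopState G,
            (if y = applyEvent e x then p x e * (∑ g, v g * xg y g) else 0) :=
          Finset.sum_comm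
      _ = ∑ e : RepEvent G, p ∅ e * (∑ g, v g * xg x (tildeMap e g)) := by
          refine Finset.sum_congr rfl fun e _ => ?_
          rw [Finset.sum_ite_eq' Finset.univ (applyEvent e x)
            (fun y => p x e * (∑ g, v g * xg y g))]
          simp [hneut x e, xg_applyEvent]
      _ = ∑ g, v g * ∑ e : RepEvent G, p ∅ e * xg x (tildeMap e g) := by
          simp only [Finset.mul_sum]
          rw [Finset.sum_comm]
          refine Finset.sum_congr rfl fun g _ => Finset.sum_congr rfl fun e _ => by ring
      _ = ∑ g, v g * ((∑ h, eMarg p h g ∅ * xg x h) + (1 - dProb p g ∅) * xg x g) := by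
          simp only [key_g hrule]
      _ = (∑ g, ∑ h, v g * (eMarg p h g ∅ * xg x h)) +
            ((∑ g, v g * xg x g) - ∑ g, dProb p g ∅ * v g * xg x g) := by
          rw [← Finset.sum_sub_distrib, ← Finset.sum_add_distrib]
          refine Finset.sum_congr rfl fun g _ => ?_
          rw [mul_add, Finset.mul_sum]
          ring
      _ = (∑ h, (dProb p h ∅ * v h) * xg x h) +
            ((∑ g, v g * xg x g) - ∑ g, dProb p g ∅ * v g * xg x g) := by
          congr 1
          rw [Finset.sum_comm]
          refine Finset.sum_congr rfl fun h _ => ?_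
          calc ∑ g, v g * (eMarg p h g ∅ * xg x h)
              = (∑ g, eMarg p h g ∅ * v g) * xg x h := by
                rw [Finset.sum_mul]
                exact Finset.sum_congr rfl fun g _ => by ring
            _ = dProb p h ∅ * v h * xg x h := by rw [← hv.1 h]
      _ = ∑ g, v g * xg x g := by
          rw [show (∑ h, (dProb p h ∅ * v h) * xg x h) = ∑ g, dProb p g ∅ * v g * xg x g from
            Finset.sum_congr rfl fun g _ => by ring]
          ring
  unfold freqHat
  rw [← hS, Finset.sum_div]
  refine Finset.sum_congr rfl fun y _ => by ring

lemma harmonic_iter {p : PopState G → RepEvent G → ℝ} (hrule : IsRule p)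
    (hneut : NeutralDrift p) {v : G → ℝ} (hv : IsRepVal p v) :
    ∀ t (x : PopState G),
      ∑ y : PopState G, iterKer (step0 p) t x y * freqHat v y = freqHat v x := by
  intro t
  induction t with
  | zero => intro x; simp [iterKer, Finset.sum_ite_eq', ite_mul]
  | succ t ih =>
      intro x
      calc ∑ y : PopState G, iterKer (step0 p) (t+1) x y * freqHat v y
          = ∑ y : PopState G, (∑ z : PopState G, iterKer (step0 p) t x z * step0 p z y) *
              freqHat v y := rfl
        _ = ∑ z : PopState G, iterKer (step0 p) t x z *
              ∑ y : PopState G, step0 p z y * freqHat v y := by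
            simp only [Finset.sum_mul, Finset.mul_sum, mul_assoc]
            exact Finset.sum_comm
        _ = ∑ z : PopState G, iterKer (step0 p) t x z * freqHat v z := by
            simp only [harmonic hrule hneut hv]
        _ = freqHat v x := ih x

end NatSel
namespace NatSel
variable {G : Type} [Fintype G] [DecidableEq G]

lemma freqHat_empty (v : G → ℝ) : freqHat v (∅ : PopState G) = 0 := by
  simp [freqHat, xg]

lemma freqHat_univ [Nonempty G] {p : PopState G → RepEvent G → ℝ} {v : G → ℝ}
    (hv : IsRepVal p v) : freqHat v (Finset.univ : PopState G) = 1 := by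
  have hn : (Fintype.card G : ℝ) ≠ 0 := Nat.cast_ne_zero.mpr Fintype.card_ne_zero
  simp only [freqHat, xg, Finset.mem_univ, if_true, mul_one, hv.2]
  field_simp

lemma sum_split [Nonempty G] (f : PopState G → ℝ) :
    ∑ z : PopState G, f z = f ∅ + f Finset.univ + ∑ z ∈ offStates G, f z := by
  have hne : (Finset.univ : PopState G) ≠ ∅ := Finset.univ_nonempty.ne_empty
  have huniv : (Finset.univ : Finset (PopState G)) =
      insert ∅ (insert Finset.univ (offStates G)) := by
    ext z
    simp only [Finset.mem_univ, true_iff, Finset.mem_insert, offStates, Finset.mem_filter]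
    tauto
  rw [huniv, Finset.sum_insert, Finset.sum_insert, ← add_assoc]
  · simp [offStates]
  · simp [offStates, Finset.mem_insert, hne.symm]

lemma iterKer_one (P : PopState G → PopState G → ℝ) (x y : PopState G) :
    iterKer P 1 x y = P x y := by
  show (∑ z : PopState G, iterKer P 0 x z * P z y) = P x y
  simp [iterKer, ite_mul, Finset.sum_ite_eq]

lemma tendsto_main [Nonempty G] {p : PopState G → RepEvent G → ℝ} (hrule : IsRule p)
    (hneut : NeutralDrift p) (hfix : FixationAxiom p) {v : G → ℝ} (hv : IsRepVal p v)
    (x : PopState G) :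
    Tendsto (fun t => iterKer (step0 p) t x Finset.univ) atTop (nhds (freqHat v x)) ∧
    Tendsto (fun t => iterKer (step0 p) t x ∅) atTop (nhds (1 - freqHat v x)) := by
  obtain ⟨m, hm, δ, hδ, hreach⟩ := reach_absorb hrule hneut hfix
  set P := step0 p with hP
  have hnn : ∀ t x y, 0 ≤ iterKer P t x y := iterKer_nonneg (step0_nonneg hrule)
  have hsum : ∀ t x, ∑ y : PopState G, iterKer P t x y = 1 := fun t x =>
    sum_iterKer (sum_step0 hrule) t x
  set a : ℕ → ℝ := fun t => ∑ y ∈ offStates G, iterKer P t x y with ha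
  have ha_nn : ∀ t, 0 ≤ a t := fun t => Finset.sum_nonneg fun y _ => hnn t x y
  have hne : (Finset.univ : PopState G) ≠ ∅ := Finset.univ_nonempty.ne_empty
  have hδ1 : δ ≤ 1 := by
    have h := hreach ∅
    rw [iterKer_empty hrule, iterKer_empty hrule] at h
    simpa [hne] using h
  have hQempty : ∀ s, ∑ y ∈ offStates G, iterKer P s ∅ y = 0 := by
    intro s
    refine Finset.sum_eq_zero fun y hy => ?_
    have hy' : y ≠ ∅ := ((Finset.mem_filter.1 hy).2).1
    rw [iterKer_empty hrule, if_neg hy']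
  have hQuniv : ∀ s, ∑ y ∈ offStates G, iterKer P s Finset.univ y = 0 := by
    intro s
    refine Finset.sum_eq_zero fun y hy => ?_
    have hy' : y ≠ Finset.univ := ((Finset.mem_filter.1 hy).2).2
    rw [iterKer_univ hrule, if_neg hy']
  have hQle : ∀ s (z : PopState G), ∑ y ∈ offStates G, iterKer P s z y ≤ 1 := by
    intro s z
    calc ∑ y ∈ offStates G, iterKer P s z y
        ≤ ∑ y : PopState G, iterKer P s z y :=
          Finset.sum_le_sum_of_subset_of_nonneg (Finset.filter_subset _ _)
            (fun y _ _ => hnn s z y)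
      _ = 1 := hsum s z
  have hQδ : ∀ z : PopState G, ∑ y ∈ offStates G, iterKer P m z y ≤ 1 - δ := by
    intro z
    have h1 := hsum m z
    rw [sum_split (f := fun y => iterKer P m z y)] at h1
    have h2 := hreach z
    linarith
  have key : ∀ (s t : ℕ), a (t + s) =
      ∑ z : PopState G, iterKer P t x z * ∑ y ∈ offStates G, iterKer P s z y := by
    intro s t
    calc a (t + s)
        = ∑ y ∈ offStates G, ∑ z : PopState G, iterKer P t x z * iterKer P s z y :=
          Finset.sum_congr rfl fun y _ => iterKer_add P t s x y
      _ = ∑ z : PopState G, ∑ y ∈ offStates G, iterKer P t x z * iterKer P s z y :=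
          Finset.sum_comm
      _ = _ := Finset.sum_congr rfl fun z _ => (Finset.mul_sum _ _ _).symm
  have hanti : Antitone a := by
    refine antitone_nat_of_succ_le fun t => ?_
    rw [key 1 t, sum_split (f := fun z => iterKer P t x z * ∑ y ∈ offStates G, iterKer P 1 z y),
      hQempty 1, hQuniv 1, mul_zero, mul_zero, zero_add, zero_add]
    calc ∑ z ∈ offStates G, iterKer P t x z * ∑ y ∈ offStates G, iterKer P 1 z y
        ≤ ∑ z ∈ offStates G, iterKer P t x z :=
          Finset.sum_le_sum fun z _ =>
            mul_le_of_le_one_right (hnn t x z) (hQle 1 z)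
      _ = a t := rfl
  have hdecay : ∀ t, a (t + m) ≤ (1 - δ) * a t := by
    intro t
    rw [key m t, sum_split (f := fun z => iterKer P t x z * ∑ y ∈ offStates G, iterKer P m z y),
      hQempty m, hQuniv m, mul_zero, mul_zero, zero_add, zero_add]
    calc ∑ z ∈ offStates G, iterKer P t x z * ∑ y ∈ offStates G, iterKer P m z y
        ≤ ∑ z ∈ offStates G, iterKer P t x z * (1 - δ) :=
          Finset.sum_le_sum fun z _ =>
            mul_le_mul_of_nonneg_left (hQδ z) (hnn t x z)
      _ = (1 - δ) * a t := by rw [← Finset.sum_mul, mul_comm]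
  have hgeo : ∀ k, a (m * k) ≤ (1 - δ) ^ k := by
    intro k
    induction k with
    | zero => simpa using hQle 0 x
    | succ k ih =>
        have : m * (k + 1) = m * k + m := by ring
        rw [this, pow_succ, mul_comm ((1-δ)^k) (1-δ)]
        calc a (m * k + m) ≤ (1 - δ) * a (m * k) := hdecay (m * k)
          _ ≤ (1 - δ) * (1 - δ) ^ k :=
            mul_le_mul_of_nonneg_left ih (by linarith)
  have habs : ∀ t, a t ≤ (1 - δ) ^ (t / m) := by
    intro t
    have h1 : m * (t / m) ≤ t := Nat.mul_div_le t m
    exact le_trans (hanti h1) (hgeo (t / m))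
  have haten : Tendsto a atTop (nhds 0) := by
    have h1 : Tendsto (fun k : ℕ => (1 - δ) ^ k) atTop (nhds 0) :=
      tendsto_pow_atTop_nhds_zero_of_lt_one (by linarith) (by linarith)
    have h2 : Tendsto (fun t : ℕ => t / m) atTop atTop :=
      Filter.tendsto_atTop_atTop.2 fun b =>
        ⟨b * m, fun t ht => (Nat.le_div_iff_mul_le hm).2 ht⟩
    exact squeeze_zero ha_nn habs (h1.comp h2)
  have hFx : ∀ t, freqHat v x = iterKer P t x Finset.univ +
      ∑ y ∈ offStates G, iterKer P t x y * freqHat v y := by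
    intro t
    have h0 := harmonic_iter hrule hneut hv t x
    rw [sum_split (f := fun y => iterKer P t x y * freqHat v y), freqHat_empty,
      freqHat_univ hv, mul_zero, mul_one, zero_add] at h0
    linarith
  have hCb : ∀ t, |∑ y ∈ offStates G, iterKer P t x y * freqHat v y| ≤
      a t * ∑ y ∈ offStates G, |freqHat v y| := by
    intro t
    calc |∑ y ∈ offStates G, iterKer P t x y * freqHat v y|
        ≤ ∑ y ∈ offStates G, |iterKer P t x y * freqHat v y| :=
          Finset.abs_sum_le_sum_abs _ _
      _ ≤ ∑ y ∈ offStates G, a t * |freqHat v y| := by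
          refine Finset.sum_le_sum fun y hy => ?_
          rw [abs_mul, abs_of_nonneg (hnn t x y)]
          refine mul_le_mul_of_nonneg_right ?_ (abs_nonneg _)
          exact Finset.single_le_sum (fun z _ => hnn t x z) hy
      _ = a t * ∑ y ∈ offStates G, |freqHat v y| := by rw [Finset.mul_sum]
  have hr : Tendsto (fun t => ∑ y ∈ offStates G, iterKer P t x y * freqHat v y)
      atTop (nhds 0) := by
    refine squeeze_zero_norm (a := fun t => a t * ∑ y ∈ offStates G, |freqHat v y|) (fun t => ?_) ?_
    · simpa [Real.norm_eq_abs] using hCb t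
    · simpa using haten.mul_const (∑ y ∈ offStates G, |freqHat v y|)
  have huniv : Tendsto (fun t => iterKer P t x Finset.univ) atTop (nhds (freqHat v x)) := by
    have heq : (fun t => iterKer P t x Finset.univ) =
        fun t => freqHat v x - ∑ y ∈ offStates G, iterKer P t x y * freqHat v y :=
      funext fun t => by linarith [hFx t]
    rw [heq]
    simpa using tendsto_const_nhds.sub hr
  refine ⟨huniv, ?_⟩
  have h2 : (fun t => iterKer P t x ∅) =
      fun t => 1 - iterKer P t x Finset.univ - a t := by
    funext t
    have := hsum t x
    rw [sum_split (f := fun y => iterKer P t x y)] at this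
    simp only [ha]
    linarith
  rw [h2]
  have := (tendsto_const_nhds (x := (1:ℝ)) (f := atTop)).sub huniv |>.sub haten
  simpa using this

end NatSel
namespace NatSel
variable {G : Type} [Fintype G] [DecidableEq G]

lemma freqHat_single (v : G → ℝ) (g : G) :
    freqHat v ({g} : PopState G) = v g / (Fintype.card G : ℝ) := by
  unfold freqHat
  congr 1
  have : ∀ h, v h * xg ({g} : PopState G) h = if h = g then v h else 0 := by
    intro h
    by_cases h' : h = g <;> simp [xg, h']
  rw [Finset.sum_congr rfl fun h _ => this h, Finset.sum_ite_eq' Finset.univ g v]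
  simp

lemma freqHat_compl {p : PopState G → RepEvent G → ℝ} {v : G → ℝ} (hv : IsRepVal p v)
    (g : G) :
    freqHat v (Finset.univ \ {g} : PopState G) = ((Fintype.card G : ℝ) - v g) / (Fintype.card G : ℝ) := by
  unfold freqHat
  congr 1
  have : ∀ h, v h * xg (Finset.univ \ {g} : PopState G) h =
      v h - (if h = g then v h else 0) := by
    intro h
    by_cases h' : h = g <;> simp [xg, h']
  rw [Finset.sum_congr rfl fun h _ => this h, Finset.sum_sub_distrib,
    Finset.sum_ite_eq' Finset.univ g v, hv.2]
  simp

lemma eMarg_indep {p : PopState G → RepEvent G → ℝ} (hneut : NeutralDrift p)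
    (g h : G) (x : PopState G) : eMarg p g h x = eMarg p g h ∅ := by
  unfold eMarg
  refine Finset.sum_congr rfl fun e _ => ?_
  by_cases hh : h ∈ e.1 <;> simp [hh, hneut x]

lemma dProb_indep {p : PopState G → RepEvent G → ℝ} (hneut : NeutralDrift p)
    (g : G) (x : PopState G) : dProb p g x = dProb p g ∅ := by
  unfold dProb
  exact Finset.sum_congr rfl fun h _ => eMarg_indep hneut h g x

lemma bTot_indep {p : PopState G → RepEvent G → ℝ} (hneut : NeutralDrift p)
    (x : PopState G) : bTot p x = bTot p ∅ := by
  unfold bTot bRate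
  exact Finset.sum_congr rfl fun g _ =>
    Finset.sum_congr rfl fun h _ => eMarg_indep hneut g h x

lemma bHatTot_eq {p : PopState G → RepEvent G → ℝ} {v : G → ℝ} (hv : IsRepVal p v) :
    bHatTot p v ∅ = ∑ g, dProb p g ∅ * v g := by
  unfold bHatTot bHat
  exact Finset.sum_congr rfl fun g _ => (hv.1 g).symm

end NatSel
open NatSel Filter Topology

/-- Theorem 8 of Allen & McAvoy: under neutral drift with
`u = 0`, the fixation probability of allele `A` from any state `x` equals the
RV-weighted frequency `x̂`; in particular the fixation probability from the
single-mutant state `1_{{g}}` is `v_g / n`, and the overall fixation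
probabilities satisfy `ρ_A = ρ_a = b̂°/(n b°)`. -/
theorem statement8
    {G : Type} [Fintype G] [DecidableEq G] [Nonempty G]
    (p : PopState G → RepEvent G → ℝ) (hrule : IsRule p) (hfix : FixationAxiom p)
    (hneut : NeutralDrift p)
    (v : G → ℝ) (hv : IsRepVal p v) :
    (∀ x : PopState G,
      Tendsto (fun t => iterKer (step0 p) t x Finset.univ) atTop
        (nhds (freqHat v x))) ∧
    (∀ g : G,
      Tendsto (fun t => iterKer (step0 p) t {g} Finset.univ) atTop
        (nhds (v g / (Fintype.card G : ℝ)))) ∧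
    ((∑ x : PopState G, muA p x *
        limUnder atTop fun t => iterKer (step0 p) t x Finset.univ) =
      bHatTot p v ∅ / ((Fintype.card G : ℝ) * bTot p ∅)) ∧
    ((∑ x : PopState G, mua p x *
        limUnder atTop fun t => iterKer (step0 p) t x ∅) =
      bHatTot p v ∅ / ((Fintype.card G : ℝ) * bTot p ∅)) := by
  have hT := fun x => tendsto_main hrule hneut hfix hv x
  have hn : (Fintype.card G : ℝ) ≠ 0 := Nat.cast_ne_zero.mpr Fintype.card_ne_zero
  refine ⟨fun x => (hT x).1, fun g => ?_, ?_, ?_⟩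
  · have h := (hT ({g} : PopState G)).1
    rwa [freqHat_single] at h
  · have hlim : ∀ x : PopState G,
        (limUnder atTop fun t => iterKer (step0 p) t x Finset.univ) = freqHat v x :=
      fun x => ((hT x).1).limUnder_eq
    calc (∑ x : PopState G, muA p x *
            limUnder atTop fun t => iterKer (step0 p) t x Finset.univ)
        = ∑ x : PopState G, muA p x * freqHat v x := by
          exact Finset.sum_congr rfl fun x _ => by rw [hlim x]
      _ = ∑ g : G, dProb p g ∅ / bTot p ∅ * freqHat v {g} := by
          unfold muA
          simp only [Finset.sum_mul, ite_mul, zero_mul]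
          rw [Finset.sum_comm]
          refine Finset.sum_congr rfl fun g _ => ?_
          rw [Finset.sum_ite_eq' Finset.univ ({g} : PopState G)
            (fun x => dProb p g ∅ / bTot p ∅ * freqHat v x)]
          simp
      _ = ∑ g : G, dProb p g ∅ * v g / ((Fintype.card G : ℝ) * bTot p ∅) := by
          refine Finset.sum_congr rfl fun g _ => ?_
          rw [freqHat_single]
          ring
      _ = bHatTot p v ∅ / ((Fintype.card G : ℝ) * bTot p ∅) := by
          rw [bHatTot_eq hv, Finset.sum_div]
  · have hlim : ∀ x : PopState G,
        (limUnder atTop fun t => iterKer (step0 p) t x ∅) = 1 - freqHat v x :=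
      fun x => ((hT x).2).limUnder_eq
    calc (∑ x : PopState G, mua p x *
            limUnder atTop fun t => iterKer (step0 p) t x ∅)
        = ∑ x : PopState G, mua p x * (1 - freqHat v x) := by
          exact Finset.sum_congr rfl fun x _ => by rw [hlim x]
      _ = ∑ g : G, dProb p g Finset.univ / bTot p Finset.univ *
            (1 - freqHat v (Finset.univ \ {g})) := by
          unfold mua
          simp only [Finset.sum_mul, ite_mul, zero_mul]
          rw [Finset.sum_comm]
          refine Finset.sum_congr rfl fun g _ => ?_
          rw [Finset.sum_ite_eq' Finset.univ (Finset.univ \ {g} : PopState G)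
            (fun x => dProb p g Finset.univ / bTot p Finset.univ * (1 - freqHat v x))]
          simp
      _ = ∑ g : G, dProb p g ∅ * v g / ((Fintype.card G : ℝ) * bTot p ∅) := by
          refine Finset.sum_congr rfl fun g _ => ?_
          rw [freqHat_compl hv, dProb_indep hneut, bTot_indep hneut]
          have h1 : 1 - ((Fintype.card G : ℝ) - v g) / (Fintype.card G : ℝ) =
              v g / (Fintype.card G : ℝ) := by
            field_simp
            ring
          rw [h1]
          ring
      _ = bHatTot p v ∅ / ((Fintype.card G : ℝ) * bTot p ∅) := by
          rw [bHatTot_eq hv, Finset.sum_div]
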